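/- Give ℕ the discrete topology and function spaces the product topology. There do not exist continuous functions η : (ℕ → ℕ → ℕ) → (ℕ → ℕ → ℕ), r₋ : ℕ × (ℕ → ℕ → ℕ) → ℕ, and r₊ : ℕ × (ℕ → ℕ → ℕ) → ℕ such that for every x : ℕ → ℕ → ℕ, writing y = η x: (i) (∃ N, ∀ n ≥ N, {t | x n t ≠ 0} is infinite) ↔ (∃ N, ∀ n ≥ N, ∃ t, y n t ≠ 0); (ii) whenever a satisfies ∀ n ≥ a, {t | x n t ≠ 0} is infinite, then b = r₋ (a, x) satisfies ∀ n ≥ b, ∃ t, y n t ≠ 0; and (iii) whenever b satisfies ∀ n ≥ b, ∃ t, y n t ≠ 0, then a = r₊ (b, x) satisfies ∀ n ≥ a, {t | x n t ≠ 0} is infinite. -/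

import Mathlib

section aux

/-- Finite use: a continuous ℕ-valued functional on a product of discrete spaces
depends only on finitely many coordinates near any point. -/
lemma use_lemma {ι : Type} {f : (ι → ℕ) → ℕ} (hf : Continuous f) (g : ι → ℕ) :
    ∃ F : Finset ι, ∀ g' : ι → ℕ, (∀ i ∈ F, g' i = g i) → f g' = f g := by
  have hopen : IsOpen (f ⁻¹' {f g}) := (isOpen_discrete _).preimage hf
  rw [isOpen_pi_iff] at hopen
  obtain ⟨I, u, hu, hsub⟩ := hopen g rfl
  refine ⟨I, fun g' hg' => ?_⟩
  have hmem : g' ∈ (I : Set ι).pi u := by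
    intro i hi
    rw [hg' i hi]
    exact (hu i hi).2
  exact hsub hmem

/-- Curried finite-use lemma. -/
lemma use_lemma2 {f : (ℕ → ℕ → ℕ) → ℕ} (hf : Continuous f) (x : ℕ → ℕ → ℕ) :
    ∃ F : Finset (ℕ × ℕ), ∀ x' : ℕ → ℕ → ℕ,
      (∀ p ∈ F, x' p.1 p.2 = x p.1 p.2) → f x' = f x := by
  have hc : Continuous (fun g : ℕ × ℕ → ℕ => f (fun n t => g (n, t))) := by
    apply hf.comp
    exact continuous_pi fun n => continuous_pi fun t => continuous_apply (n, t)
  obtain ⟨F, hF⟩ := use_lemma hc (fun p => x p.1 p.2)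
  refine ⟨F, fun x' hx' => ?_⟩
  exact hF (fun p => x' p.1 p.2) (fun p hp => hx' p hp)

/-- Boundedness on the compact set of {0,1}-valued functions. -/
lemma bdd_lemma {f : (ℕ → ℕ → ℕ) → ℕ} (hf : Continuous f) :
    ∃ B : ℕ, ∀ x : ℕ → ℕ → ℕ, (∀ n t, x n t ≤ 1) → f x ≤ B := by
  have hcc : Continuous (fun b : ℕ → ℕ → Bool => (fun n t => if b n t then 1 else 0 : ℕ → ℕ → ℕ)) := by
    refine continuous_pi fun n => continuous_pi fun t => ?_
    exact (continuous_of_discreteTopology (f := fun v : Bool => (if v then (1:ℕ) else 0))).comp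
      ((continuous_apply t).comp (continuous_apply n))
  have hcomp : IsCompact (Set.range fun b : ℕ → ℕ → Bool =>
      f (fun n t => if b n t then 1 else 0)) := isCompact_range (hf.comp hcc)
  have hfin : (Set.range fun b : ℕ → ℕ → Bool =>
      f (fun n t => if b n t then 1 else 0)).Finite := hcomp.finite ⟨by infer_instance⟩
  obtain ⟨B, hB⟩ := hfin.bddAbove
  refine ⟨B, fun x hx => ?_⟩
  have hxc : (fun n t => if decide (x n t = 1) then 1 else 0 : ℕ → ℕ → ℕ) = x := by
    funext n t
    have := hx n t
    by_cases h : x n t = 1 <;> simp [h] <;> omega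
  have hmem : f x ∈ Set.range fun b : ℕ → ℕ → Bool =>
      f (fun n t => if b n t then 1 else 0) :=
    ⟨fun n t => decide (x n t = 1), congrArg f hxc⟩
  exact hB hmem

end aux

section construction

variable (η : (ℕ → ℕ → ℕ) → (ℕ → ℕ → ℕ)) (rminus : ℕ × (ℕ → ℕ → ℕ) → ℕ) (Bm : ℕ → ℕ)

/-- Total function agreeing with `V` on `D`, zero on columns `< j` elsewhere,
one on columns `≥ j` elsewhere. -/
def fill (j : ℕ) (D : Finset (ℕ × ℕ)) (V : ℕ → ℕ → ℕ) : ℕ → ℕ → ℕ :=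
  fun n t => if (n, t) ∈ D then V n t else if n < j then 0 else 1

lemma fill_le_one {j D V} (hV : ∀ n t, V n t ≤ 1) : ∀ n t, fill j D V n t ≤ 1 := by
  intro n t
  unfold fill
  split_ifs <;> simp [hV n t]

lemma fill_col_infinite (j : ℕ) (D : Finset (ℕ × ℕ)) (V : ℕ → ℕ → ℕ) (n : ℕ) (hn : j ≤ n) :
    {t | fill j D V n t ≠ 0}.Infinite := by
  have hfin : {t | (n, t) ∈ D}.Finite :=
    Set.Finite.subset (D.finite_toSet.image Prod.snd)
      (fun t ht => ⟨(n, t), ht, rfl⟩)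
  refine hfin.infinite_compl.mono ?_
  intro t ht
  simp only [Set.mem_compl_iff, Set.mem_setOf_eq] at ht
  simp [fill, ht, Nat.not_lt.mpr hn]

/-- The specification of a "good" finite commitment at stage `j`. -/
def stepSpec (j : ℕ) (D : Finset (ℕ × ℕ)) (V : ℕ → ℕ → ℕ) (F : Finset (ℕ × ℕ)) : Prop :=
  ∀ x' : ℕ → ℕ → ℕ, (∀ p ∈ F, x' p.1 p.2 = fill j D V p.1 p.2) →
    ∀ n, rminus (j, fill j D V) ≤ n → n ≤ Bm (j + 1) → ∃ t, η x' n t ≠ 0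

open Classical in
noncomputable def stepF (j : ℕ) (D : Finset (ℕ × ℕ)) (V : ℕ → ℕ → ℕ) : Finset (ℕ × ℕ) :=
  if h : ∃ F, stepSpec η rminus Bm j D V F then h.choose else ∅

/-- The stages: finite committed domain and committed values. -/
noncomputable def DD : ℕ → Finset (ℕ × ℕ) × (ℕ → ℕ → ℕ)
  | 0 => (∅, fun _ _ => 0)
  | j + 1 =>
      ((DD j).1 ∪ stepF η rminus Bm j (DD j).1 (DD j).2,
        fill j (DD j).1 (DD j).2)

noncomputable def X (j : ℕ) : ℕ → ℕ → ℕ :=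
  fill j (DD η rminus Bm j).1 (DD η rminus Bm j).2

noncomputable def xstar : ℕ → ℕ → ℕ := fun n t => X η rminus Bm (n + 1) n t

lemma V_le_one : ∀ j n t, (DD η rminus Bm j).2 n t ≤ 1 := by
  intro j
  induction j with
  | zero => intro n t; simp [DD]
  | succ j ih =>
      intro n t
      show fill j (DD η rminus Bm j).1 (DD η rminus Bm j).2 n t ≤ 1
      exact fill_le_one ih n t

lemma X_le_one (j : ℕ) : ∀ n t, X η rminus Bm j n t ≤ 1 :=
  fill_le_one (V_le_one η rminus Bm j)

lemma DD_mono {j k : ℕ} (h : j ≤ k) :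
    (DD η rminus Bm j).1 ⊆ (DD η rminus Bm k).1 := by
  induction k, h using Nat.le_induction with
  | base => exact subset_rfl
  | succ k hk ih =>
      refine ih.trans ?_
      show (DD η rminus Bm k).1 ⊆ (DD η rminus Bm k).1 ∪ _
      exact Finset.subset_union_left

/-- one-step stability -/
lemma X_succ_eq (j n t : ℕ)
    (h : n < j ∨ (n, t) ∈ (DD η rminus Bm (j + 1)).1) :
    X η rminus Bm (j + 1) n t = X η rminus Bm j n t := by
  by_cases hmem : (n, t) ∈ (DD η rminus Bm (j + 1)).1
  · show fill (j+1) (DD η rminus Bm (j+1)).1 (DD η rminus Bm (j+1)).2 n t = _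
    rw [fill, if_pos hmem]
    rfl
  · rcases h with h | h
    · have hmem' : (n, t) ∉ (DD η rminus Bm j).1 := by
        intro hc
        exact hmem (DD_mono η rminus Bm (Nat.le_succ j) hc)
      show fill (j+1) (DD η rminus Bm (j+1)).1 (DD η rminus Bm (j+1)).2 n t
        = fill j (DD η rminus Bm j).1 (DD η rminus Bm j).2 n t
      rw [fill, if_neg hmem, fill, if_neg hmem', if_pos h, if_pos (Nat.lt_succ_of_lt h)]
    · exact absurd h hmem

lemma X_stable (j k n t : ℕ) (hjk : j ≤ k)
    (h : n < j ∨ (n, t) ∈ (DD η rminus Bm j).1) :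
    X η rminus Bm k n t = X η rminus Bm j n t := by
  induction k, hjk using Nat.le_induction with
  | base => rfl
  | succ k hk ih =>
      rw [X_succ_eq η rminus Bm k n t, ih]
      rcases h with h | h
      · exact Or.inl (lt_of_lt_of_le h hk)
      · exact Or.inr (DD_mono η rminus Bm (hk.trans (Nat.le_succ k)) h)

lemma xstar_eq_of (j n t : ℕ)
    (h : n < j ∨ (n, t) ∈ (DD η rminus Bm j).1) :
    xstar η rminus Bm n t = X η rminus Bm j n t := by
  unfold xstar
  rcases le_total j (n + 1) with hle | hle
  · exact X_stable η rminus Bm j (n + 1) n t hle h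
  · exact (X_stable η rminus Bm (n + 1) j n t hle (Or.inl (Nat.lt_succ_self n))).symm

lemma xstar_col_finite (n : ℕ) : {t | xstar η rminus Bm n t ≠ 0}.Finite := by
  apply Set.Finite.subset ((DD η rminus Bm (n + 1)).1.finite_toSet.image Prod.snd)
  intro t ht
  simp only [Set.mem_setOf_eq] at ht
  have hmem : (n, t) ∈ (DD η rminus Bm (n + 1)).1 := by
    by_contra hmem
    apply ht
    show fill (n+1) (DD η rminus Bm (n+1)).1 (DD η rminus Bm (n+1)).2 n t = 0
    rw [fill, if_neg hmem, if_pos (Nat.lt_succ_self n)]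
  exact ⟨(n, t), hmem, rfl⟩

lemma stepF_spec (hη : Continuous η)
    (hii : ∀ (x : ℕ → ℕ → ℕ) a, (∀ n ≥ a, {t | x n t ≠ 0}.Infinite) →
      ∀ n ≥ rminus (a, x), ∃ t, η x n t ≠ 0)
    (j : ℕ) (D : Finset (ℕ × ℕ)) (V : ℕ → ℕ → ℕ) :
    stepSpec η rminus Bm j D V (stepF η rminus Bm j D V) := by
  classical
  have hex : ∃ F, stepSpec η rminus Bm j D V F := by
    set x := fill j D V with hx
    have hcol : ∀ n ≥ j, {t | x n t ≠ 0}.Infinite :=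
      fun n hn => fill_col_infinite j D V n hn
    have hG := hii x j hcol
    set w : ℕ → ℕ := fun n => if h : ∃ t, η x n t ≠ 0 then h.choose else 0 with hw
    have hwit : ∀ n, rminus (j, x) ≤ n → η x n (w n) ≠ 0 := by
      intro n hn
      have h := hG n hn
      simp only [hw, dif_pos h]
      exact h.choose_spec
    have huse : ∀ n : ℕ, ∃ F : Finset (ℕ × ℕ), ∀ x' : ℕ → ℕ → ℕ,
        (∀ p ∈ F, x' p.1 p.2 = x p.1 p.2) → η x' n (w n) = η x n (w n) := by
      intro n
      exact use_lemma2 ((continuous_apply (w n)).comp ((continuous_apply n).comp hη)) x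
    choose F hF using huse
    refine ⟨(Finset.Icc (rminus (j, x)) (Bm (j + 1))).biUnion F, ?_⟩
    intro x' hagree n hn1 hn2
    have hnI : n ∈ Finset.Icc (rminus (j, x)) (Bm (j + 1)) := Finset.mem_Icc.mpr ⟨hn1, hn2⟩
    have hag : ∀ p ∈ F n, x' p.1 p.2 = x p.1 p.2 :=
      fun p hp => hagree p (Finset.mem_biUnion.mpr ⟨n, hnI, hp⟩)
    exact ⟨w n, by rw [hF n x' hag]; exact hwit n hn1⟩
  unfold stepF
  rw [dif_pos hex]
  exact hex.choose_spec

lemma rows_secured (hη : Continuous η)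
    (hii : ∀ (x : ℕ → ℕ → ℕ) a, (∀ n ≥ a, {t | x n t ≠ 0}.Infinite) →
      ∀ n ≥ rminus (a, x), ∃ t, η x n t ≠ 0)
    (j n : ℕ) (h1 : rminus (j, X η rminus Bm j) ≤ n) (h2 : n ≤ Bm (j + 1)) :
    ∃ t, η (xstar η rminus Bm) n t ≠ 0 := by
  have hs := stepF_spec η rminus Bm hη hii j (DD η rminus Bm j).1 (DD η rminus Bm j).2
  refine hs (xstar η rminus Bm) ?_ n h1 h2
  intro p hp
  have hmem : (p.1, p.2) ∈ (DD η rminus Bm (j + 1)).1 := by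
    show (p.1, p.2) ∈ (DD η rminus Bm j).1 ∪ stepF η rminus Bm j (DD η rminus Bm j).1 (DD η rminus Bm j).2
    rw [Prod.mk.eta]
    exact Finset.mem_union_right _ hp
  have h1' := xstar_eq_of η rminus Bm (j + 1) p.1 p.2 (Or.inr hmem)
  rw [h1']
  show fill (j+1) (DD η rminus Bm (j+1)).1 (DD η rminus Bm (j+1)).2 p.1 p.2 = _
  rw [fill, if_pos hmem]
  rfl

lemma rows_all (hη : Continuous η)
    (hii : ∀ (x : ℕ → ℕ → ℕ) a, (∀ n ≥ a, {t | x n t ≠ 0}.Infinite) →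
      ∀ n ≥ rminus (a, x), ∃ t, η x n t ≠ 0)
    (hBm : ∀ a (x : ℕ → ℕ → ℕ), (∀ n t, x n t ≤ 1) → rminus (a, x) ≤ Bm a)
    (hge : ∀ k, k ≤ Bm k) :
    ∀ n, Bm 0 ≤ n → ∃ t, η (xstar η rminus Bm) n t ≠ 0 := by
  intro n hn
  classical
  set j := Nat.findGreatest (fun j => Bm j ≤ n) n with hj
  have hPj : Bm j ≤ n :=
    Nat.findGreatest_spec (P := fun j => Bm j ≤ n) (Nat.zero_le n) hn
  have hn2 : n < Bm (j + 1) := by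
    by_contra hcon
    push_neg at hcon
    have hle : j + 1 ≤ n := le_trans (hge (j + 1)) hcon
    exact Nat.findGreatest_is_greatest (P := fun j => Bm j ≤ n) (n := n)
      (Nat.lt_succ_self j) hle hcon
  have hb : rminus (j, X η rminus Bm j) ≤ Bm j :=
    hBm j _ (X_le_one η rminus Bm j)
  exact rows_secured η rminus Bm hη hii j n (le_trans hb hPj) (le_of_lt hn2)

end construction

/-- continuous version of the separation ⟨∀^∞∃^∞⟩ ≰ ⟨∀^∞∃⟩. -/
theorem stmt_13 :
    ¬ ∃ (η : (ℕ → ℕ → ℕ) → (ℕ → ℕ → ℕ)) (rminus rplus : ℕ × (ℕ → ℕ → ℕ) → ℕ),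
      Continuous η ∧ Continuous rminus ∧ Continuous rplus ∧
      ∀ x : ℕ → ℕ → ℕ,
        ((∃ N, ∀ n ≥ N, {t : ℕ | x n t ≠ 0}.Infinite) ↔
          (∃ N, ∀ n ≥ N, ∃ t, η x n t ≠ 0)) ∧
        (∀ a, (∀ n ≥ a, {t : ℕ | x n t ≠ 0}.Infinite) →
          ∀ n ≥ rminus (a, x), ∃ t, η x n t ≠ 0) ∧
        (∀ b, (∀ n ≥ b, ∃ t, η x n t ≠ 0) →
          ∀ n ≥ rplus (b, x), {t : ℕ | x n t ≠ 0}.Infinite) := by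
  rintro ⟨η, rminus, rplus, hη, hrm, hrp, H⟩
  have hii : ∀ (x : ℕ → ℕ → ℕ) a, (∀ n ≥ a, {t | x n t ≠ 0}.Infinite) →
      ∀ n ≥ rminus (a, x), ∃ t, η x n t ≠ 0 := fun x a h => (H x).2.1 a h
  have hBex : ∀ a : ℕ, ∃ B, ∀ x : ℕ → ℕ → ℕ, (∀ n t, x n t ≤ 1) → rminus (a, x) ≤ B := by
    intro a
    exact bdd_lemma (hrm.comp (continuous_const.prodMk continuous_id))
  choose B0 hB0 using hBex
  set Bm : ℕ → ℕ := fun a => a + B0 a with hBmdef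
  have hBm : ∀ a (x : ℕ → ℕ → ℕ), (∀ n t, x n t ≤ 1) → rminus (a, x) ≤ Bm a := by
    intro a x hx
    have := hB0 a x hx
    simp only [hBmdef]
    omega
  have hge : ∀ k, k ≤ Bm k := fun k => Nat.le_add_right k (B0 k)
  set x := xstar η rminus Bm with hxdef
  have hrows : ∀ n ≥ Bm 0, ∃ t, η x n t ≠ 0 :=
    rows_all η rminus Bm hη hii hBm hge
  have hinf := (H x).2.2 (Bm 0) hrows (rplus (Bm 0, x)) le_rfl
  exact (Set.not_infinite.mpr (xstar_col_finite η rminus Bm (rplus (Bm 0, x)))) hinf
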